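/- Let n ≥ 2 and let p be a prime. Then SL_{n+1}(F_p[t]) = EL_{n+1}(F_p[t]): every (n+1)×(n+1) matrix with entries in F_p[t] and determinant 1 is a finite product of elementary matrices e_{i,j}(r) with 1 ≤ i,j ≤ n+1, i ≠ j, and r ∈ F_p[t]. -/

import Mathlib

open Matrix Polynomial

set_option linter.unusedSectionVars false
set_option maxHeartbeats 1000000

namespace SLGenAux

variable {K : Type*} [Field K] [DecidableEq K] {m : ℕ}

def TS (m : ℕ) (K : Type*) [Field K] : Set (Matrix.SpecialLinearGroup (Fin m) (Polynomial K)) :=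
  { A | ∃ i j : Fin m, i ≠ j ∧ ∃ r : Polynomial K, A.1 = Matrix.transvection i j r }

noncomputable def T (i j : Fin m) (h : i ≠ j) (c : Polynomial K) :
    Matrix.SpecialLinearGroup (Fin m) (Polynomial K) :=
  ⟨Matrix.transvection i j c, Matrix.det_transvection_of_ne i j h c⟩

lemma T_mem (i j : Fin m) (h : i ≠ j) (c : Polynomial K) :
    T i j h c ∈ Subgroup.closure (TS m K) :=
  Subgroup.subset_closure ⟨i, j, h, c, rfl⟩

lemma mem_of_T_mul (i j : Fin m) (h : i ≠ j) (c : Polynomial K)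
    (A : Matrix.SpecialLinearGroup (Fin m) (Polynomial K))
    (hA : T i j h c * A ∈ Subgroup.closure (TS m K)) : A ∈ Subgroup.closure (TS m K) := by
  have := mul_mem (inv_mem (T_mem i j h c)) hA
  rwa [inv_mul_cancel_left] at this

lemma mem_of_mul_T (i j : Fin m) (h : i ≠ j) (c : Polynomial K)
    (A : Matrix.SpecialLinearGroup (Fin m) (Polynomial K))
    (hA : A * T i j h c ∈ Subgroup.closure (TS m K)) : A ∈ Subgroup.closure (TS m K) := by
  have := mul_mem hA (inv_mem (T_mem i j h c))
  rwa [mul_inv_cancel_right] at this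

lemma T_mul_apply (i j : Fin m) (h : i ≠ j) (c : Polynomial K)
    (A : Matrix.SpecialLinearGroup (Fin m) (Polynomial K)) (a b : Fin m) :
    (T i j h c * A).1 a b = A.1 a b + (if a = i then c * A.1 j b else 0) := by
  show ((T i j h c).1 * A.1) a b = _
  by_cases ha : a = i
  · subst ha; simp [T]
  · simp [T, ha]

lemma mul_T_apply (i j : Fin m) (h : i ≠ j) (c : Polynomial K)
    (A : Matrix.SpecialLinearGroup (Fin m) (Polynomial K)) (a b : Fin m) :
    (A * T i j h c).1 a b = A.1 a b + (if b = j then c * A.1 a i else 0) := by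
  show (A.1 * (T i j h c).1) a b = _
  by_cases hb : b = j
  · subst hb; simp [T]
  · simp [T, hb]

/-- rows and columns with index `< k` are as in the identity matrix -/
def Fixed (k : ℕ) (A : Matrix.SpecialLinearGroup (Fin m) (Polynomial K)) : Prop :=
  ∀ i j : Fin m, ((i : ℕ) < k ∨ (j : ℕ) < k) → A.1 i j = if i = j then 1 else 0

lemma Fixed_T_mul (k : ℕ) (i j : Fin m) (h : i ≠ j) (hik : k ≤ (i : ℕ)) (hjk : k ≤ (j : ℕ))
    (c : Polynomial K) (A : Matrix.SpecialLinearGroup (Fin m) (Polynomial K))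
    (hF : Fixed k A) : Fixed k (T i j h c * A) := by
  intro x y hxy
  rw [T_mul_apply]
  by_cases hx : x = i
  · subst hx
    have hy : (y : ℕ) < k := by rcases hxy with h' | h' <;> omega
    have h1 : A.1 x y = 0 := by
      rw [hF x y (Or.inr hy), if_neg (fun e => by subst e; omega)]
    have h2 : A.1 j y = 0 := by
      rw [hF j y (Or.inr hy), if_neg (fun e => by subst e; omega)]
    rw [h1, h2, if_pos rfl, mul_zero, add_zero, if_neg (fun e => by subst e; omega)]
  · rw [if_neg hx, add_zero]
    exact hF x y hxy

lemma Fixed_mul_T (k : ℕ) (i j : Fin m) (h : i ≠ j) (hik : k ≤ (i : ℕ)) (hjk : k ≤ (j : ℕ))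
    (c : Polynomial K) (A : Matrix.SpecialLinearGroup (Fin m) (Polynomial K))
    (hF : Fixed k A) : Fixed k (A * T i j h c) := by
  intro x y hxy
  rw [mul_T_apply]
  by_cases hy : y = j
  · subst hy
    have hx : (x : ℕ) < k := by rcases hxy with h' | h' <;> omega
    have h1 : A.1 x y = 0 := by
      rw [hF x y (Or.inl hx), if_neg (fun e => by subst e; omega)]
    have h2 : A.1 x i = 0 := by
      rw [hF x i (Or.inl hx), if_neg (fun e => by subst e; omega)]
    rw [h1, h2, if_pos rfl, mul_zero, add_zero, if_neg (fun e => by subst e; omega)]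
  · rw [if_neg hy, add_zero]
    exact hF x y hxy

theorem main (m : ℕ) (A₀ : Matrix.SpecialLinearGroup (Fin m) (Polynomial K)) :
    A₀ ∈ Subgroup.closure (TS m K) := by
  suffices H : ∀ d k, k + d = m →
      ∀ A : Matrix.SpecialLinearGroup (Fin m) (Polynomial K),
        Fixed k A → A ∈ Subgroup.closure (TS m K) by
    exact H m 0 (Nat.zero_add m) A₀ (fun i j hij => by omega)
  intro d
  induction d with
  | zero =>
    intro k hk A hA
    have hA1 : A = 1 := by
      apply Subtype.ext
      ext i j
      have := hA i j (Or.inl (by omega))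
      rw [this]
      simp [Matrix.one_apply]
    rw [hA1]; exact one_mem _
  | succ d IH =>
    intro k hk A hFix
    have hkm : k < m := by omega
    set kF : Fin m := ⟨k, hkm⟩ with hkFdef
    have hkv : (kF : ℕ) = k := rfl
    -- Step 2: clear row k once the column is done
    have clearRow : ∀ N (A : Matrix.SpecialLinearGroup (Fin m) (Polynomial K)),
        Fixed k A →
        (∀ i : Fin m, A.1 i kF = if i = kF then 1 else 0) →
        (Finset.univ.filter fun j : Fin m => j ≠ kF ∧ A.1 kF j ≠ 0).card = N →
        A ∈ Subgroup.closure (TS m K) := by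
      intro N
      induction N using Nat.strong_induction_on with
      | _ N IHN =>
      intro A hF hcol hcard
      rcases Nat.eq_zero_or_pos N with h0 | hpos
      · subst h0
        rw [Finset.card_eq_zero] at hcard
        have hrow : ∀ j : Fin m, j ≠ kF → A.1 kF j = 0 := by
          intro j hj
          by_contra hne
          have hmem : j ∈ Finset.univ.filter (fun j : Fin m => j ≠ kF ∧ A.1 kF j ≠ 0) := by
            simp [hj, hne]
          rw [hcard] at hmem
          exact absurd hmem (Finset.notMem_empty j)
        apply IH (k + 1) (by omega)
        intro i j hij
        rcases lt_or_ge (i : ℕ) k with h | h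
        · exact hF i j (Or.inl h)
        rcases lt_or_ge (j : ℕ) k with h' | h'
        · exact hF i j (Or.inr h')
        rcases hij with hij | hij
        · have hik : i = kF := Fin.ext (by omega)
          subst hik
          by_cases hj : j = kF
          · subst hj; simp [hcol kF]
          · rw [hrow j hj, if_neg (fun e => hj e.symm)]
        · have hjk : j = kF := Fin.ext (by omega)
          subst hjk
          exact hcol i
      · have hne : (Finset.univ.filter fun j : Fin m => j ≠ kF ∧ A.1 kF j ≠ 0).Nonempty := by
          rw [← Finset.card_pos, hcard]; exact hpos
        obtain ⟨j0, hj0⟩ := hne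
        simp only [Finset.mem_filter, Finset.mem_univ, true_and] at hj0
        obtain ⟨hj0k, hj0ne⟩ := hj0
        have hkj0 : kF ≠ j0 := fun e => hj0k e.symm
        have hj0ge : k ≤ (j0 : ℕ) := by
          by_contra h
          push_neg at h
          rw [hF kF j0 (Or.inr h), if_neg hkj0] at hj0ne
          exact hj0ne rfl
        apply mem_of_mul_T kF j0 hkj0 (-(A.1 kF j0))
        set B := A * T kF j0 hkj0 (-(A.1 kF j0)) with hBdef
        have hBent : ∀ a b, B.1 a b = A.1 a b + (if b = j0 then (-(A.1 kF j0)) * A.1 a kF else 0) :=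
          fun a b => mul_T_apply kF j0 hkj0 (-(A.1 kF j0)) A a b
        have hFB : Fixed k B := Fixed_mul_T k kF j0 hkj0 (le_refl k) hj0ge _ A hF
        have hcolB : ∀ i : Fin m, B.1 i kF = if i = kF then 1 else 0 := by
          intro i
          rw [hBent, if_neg hkj0, add_zero]
          exact hcol i
        have hBkj0 : B.1 kF j0 = 0 := by
          rw [hBent, if_pos rfl, hcol kF, if_pos rfl, mul_one, add_neg_cancel]
        have hother : ∀ b, b ≠ j0 → B.1 kF b = A.1 kF b := by
          intro b hb
          rw [hBent, if_neg hb, add_zero]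
        have hsub : (Finset.univ.filter fun j : Fin m => j ≠ kF ∧ B.1 kF j ≠ 0)
            ⊂ (Finset.univ.filter fun j : Fin m => j ≠ kF ∧ A.1 kF j ≠ 0) := by
          rw [Finset.ssubset_iff_of_subset]
          · exact ⟨j0, by simp [hj0k, hj0ne], by simp [hBkj0]⟩
          · intro x hx
            simp only [Finset.mem_filter, Finset.mem_univ, true_and] at hx ⊢
            rcases eq_or_ne x j0 with rfl | hxj0
            · exact absurd hx.2 (by simp [hBkj0])
            · rw [hother x hxj0] at hx; exact hx
        exact IHN _ (by rw [← hcard]; exact Finset.card_lt_card hsub) B hFB hcolB rfl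
    -- Step 1: reduce column k
    have colRed : ∀ N (A : Matrix.SpecialLinearGroup (Fin m) (Polynomial K)),
        Fixed k A → (∑ i : Fin m, (if A.1 i kF = 0 then 0 else (A.1 i kF).natDegree + 1)) = N →
        A ∈ Subgroup.closure (TS m K) := by
      intro N
      induction N using Nat.strong_induction_on with
      | _ N IHN =>
      intro A hF hsum
      have hge : ∀ i : Fin m, A.1 i kF ≠ 0 → k ≤ (i : ℕ) := by
        intro i hi
        by_contra h
        push_neg at h
        rw [hF i kF (Or.inl h), if_neg (fun e => by subst e; omega)] at hi
        exact hi rfl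
      have hsne : (Finset.univ.filter (fun i : Fin m => A.1 i kF ≠ 0)).Nonempty := by
        by_contra h
        have hz : ∀ i, A.1 i kF = 0 := by
          intro i
          by_contra hzz
          exact h ⟨i, by simp [hzz]⟩
        have hdet := A.2
        rw [Matrix.det_eq_zero_of_column_eq_zero kF hz] at hdet
        exact zero_ne_one hdet
      by_cases hcard : (Finset.univ.filter (fun i : Fin m => A.1 i kF ≠ 0)).card ≤ 1
      · -- exactly one nonzero entry, necessarily a unit
        obtain ⟨i0, hi0⟩ := hsne
        have hu : A.1 i0 kF ≠ 0 := by
          rw [Finset.mem_filter] at hi0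
          exact hi0.2
        have hsingle : ∀ i, i ≠ i0 → A.1 i kF = 0 := by
          intro i hi
          by_contra hne2
          have h2 : 1 < (Finset.univ.filter (fun i : Fin m => A.1 i kF ≠ 0)).card :=
            Finset.one_lt_card.2 ⟨i, by simp [hne2], i0, hi0, hi⟩
          omega
        obtain ⟨v, hv⟩ : ∃ v, v * A.1 i0 kF = 1 := by
          have h1 : ((A⁻¹).1 * A.1) kF kF = 1 := by
            rw [show (A⁻¹).1 * A.1 =
              ((A⁻¹ * A : Matrix.SpecialLinearGroup (Fin m) (Polynomial K)) :
                Matrix (Fin m) (Fin m) (Polynomial K)) from rfl, inv_mul_cancel]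
            simp
          rw [Matrix.mul_apply] at h1
          have h2 : ∑ j : Fin m, (A⁻¹).1 kF j * A.1 j kF = (A⁻¹).1 kF i0 * A.1 i0 kF :=
            Finset.sum_eq_single i0 (fun b _ hb => by rw [hsingle b hb, mul_zero])
              (fun h => absurd (Finset.mem_univ i0) h)
          exact ⟨(A⁻¹).1 kF i0, by rw [← h2, h1]⟩
        have hi0ge : k ≤ (i0 : ℕ) := hge i0 hu
        by_cases hi0k : i0 = kF
        · -- the nonzero entry is on the diagonal
          rw [hi0k] at hu hsingle hv
          by_cases hk1 : k + 1 < m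
          · set i1 : Fin m := ⟨k + 1, hk1⟩ with hi1def
            have hi1v : (i1 : ℕ) = k + 1 := rfl
            have h10 : i1 ≠ kF := by
              intro e
              have := congrArg Fin.val e
              omega
            have h01 : kF ≠ i1 := fun e => h10 e.symm
            have hi1ge : k ≤ (i1 : ℕ) := by omega
            apply mem_of_T_mul i1 kF h10 v
            set A1 := T i1 kF h10 v * A with hA1def
            have e1 : ∀ a b, A1.1 a b = A.1 a b + (if a = i1 then v * A.1 kF b else 0) :=
              fun a b => T_mul_apply i1 kF h10 v A a b
            have hF1 : Fixed k A1 := Fixed_T_mul k i1 kF h10 hi1ge (le_refl k) v A hF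
            apply mem_of_T_mul kF i1 h01 (1 - A.1 kF kF)
            set A2 := T kF i1 h01 (1 - A.1 kF kF) * A1 with hA2def
            have e2 : ∀ a b, A2.1 a b = A1.1 a b + (if a = kF then (1 - A.1 kF kF) * A1.1 i1 b else 0) :=
              fun a b => T_mul_apply kF i1 h01 (1 - A.1 kF kF) A1 a b
            have hF2 : Fixed k A2 := Fixed_T_mul k kF i1 h01 (le_refl k) hi1ge _ A1 hF1
            apply mem_of_T_mul i1 kF h10 (-1)
            set A3 := T i1 kF h10 (-1) * A2 with hA3def
            have e3 : ∀ a b, A3.1 a b = A2.1 a b + (if a = i1 then (-1) * A2.1 kF b else 0) :=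
              fun a b => T_mul_apply i1 kF h10 (-1) A2 a b
            have hF3 : Fixed k A3 := Fixed_T_mul k i1 kF h10 hi1ge (le_refl k) (-1) A2 hF2
            have c1 : A1.1 i1 kF = 1 := by
              rw [e1, if_pos rfl, hsingle i1 h10, hv, zero_add]
            have c1' : ∀ i, i ≠ i1 → A1.1 i kF = A.1 i kF := by
              intro i hi; rw [e1, if_neg hi, add_zero]
            have c2 : A2.1 kF kF = 1 := by
              rw [e2, if_pos rfl, c1, c1' kF h01, mul_one]
              ring
            have c2' : ∀ i, i ≠ kF → A2.1 i kF = A1.1 i kF := by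
              intro i hi; rw [e2, if_neg hi, add_zero]
            have c3 : ∀ i : Fin m, A3.1 i kF = if i = kF then 1 else 0 := by
              intro i
              by_cases hik : i = kF
              · rw [hik, e3, if_neg h01, add_zero, c2, if_pos rfl]
              · by_cases hii1 : i = i1
                · rw [hii1, e3, if_pos rfl, c2, c2' i1 h10, c1, if_neg h10]
                  ring
                · rw [e3, if_neg hii1, add_zero, c2' i hik, c1' i hii1,
                    hsingle i hik, if_neg hik]
            exact clearRow _ A3 hF3 c3 rfl
          · -- k = m - 1 : the matrix is diagonal and the determinant forces the entry to be 1
            have hdiag : A.1 = Matrix.diagonal (fun i => if i = kF then A.1 kF kF else 1) := by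
              ext i j
              by_cases hij : i = j
              · subst hij
                rw [Matrix.diagonal_apply_eq]
                by_cases hik : i = kF
                · rw [if_pos hik, hik]
                · have hlt : (i : ℕ) < k := by
                    have h1 := i.isLt
                    have h2 : (i : ℕ) ≠ k := fun e => hik (Fin.ext (by omega))
                    omega
                  rw [hF i i (Or.inl hlt), if_pos rfl, if_neg hik]
              · rw [Matrix.diagonal_apply_ne _ hij]
                have hvals : (i : ℕ) ≠ (j : ℕ) := fun e => hij (Fin.ext e)
                have hor : (i : ℕ) < k ∨ (j : ℕ) < k := by
                  have h1 := i.isLt; have h2 := j.isLt; omega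
                rw [hF i j hor, if_neg hij]
            have hdet := A.2
            rw [hdiag, Matrix.det_diagonal] at hdet
            have hu1 : A.1 kF kF = 1 := by
              rw [Finset.prod_ite_eq' Finset.univ kF (fun _ => A.1 kF kF)] at hdet
              simpa using hdet
            have hA1 : A = 1 := by
              apply Subtype.ext
              rw [hdiag, hu1]
              simp
            rw [hA1]; exact one_mem _
        · -- off-diagonal single entry
          have hki0 : kF ≠ i0 := fun e => hi0k e.symm
          apply mem_of_T_mul kF i0 hki0 v
          set A1 := T kF i0 hki0 v * A with hA1def
          have e1 : ∀ a b, A1.1 a b = A.1 a b + (if a = kF then v * A.1 i0 b else 0) :=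
            fun a b => T_mul_apply kF i0 hki0 v A a b
          have hF1 : Fixed k A1 := Fixed_T_mul k kF i0 hki0 (le_refl k) hi0ge v A hF
          apply mem_of_T_mul i0 kF hi0k (-(A.1 i0 kF))
          set A2 := T i0 kF hi0k (-(A.1 i0 kF)) * A1 with hA2def
          have e2 : ∀ a b, A2.1 a b = A1.1 a b + (if a = i0 then (-(A.1 i0 kF)) * A1.1 kF b else 0) :=
            fun a b => T_mul_apply i0 kF hi0k (-(A.1 i0 kF)) A1 a b
          have hF2 : Fixed k A2 := Fixed_T_mul k i0 kF hi0k hi0ge (le_refl k) _ A1 hF1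
          have c1 : A1.1 kF kF = 1 := by
            rw [e1, if_pos rfl, hsingle kF hki0, hv, zero_add]
          have c1' : ∀ i, i ≠ kF → A1.1 i kF = A.1 i kF := by
            intro i hi; rw [e1, if_neg hi, add_zero]
          have c2 : ∀ i : Fin m, A2.1 i kF = if i = kF then 1 else 0 := by
            intro i
            by_cases hik : i = i0
            · rw [hik, e2, if_pos rfl, c1, c1' i0 hi0k, mul_one, if_neg hi0k]
              ring
            · by_cases hikF : i = kF
              · rw [hikF, e2, if_neg hki0, add_zero, c1, if_pos rfl]
              · rw [e2, if_neg hik, add_zero, c1' i hikF, hsingle i hik, if_neg hikF]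
          exact clearRow _ A2 hF2 c2 rfl
      · -- at least two nonzero entries: Euclidean reduction step
        push_neg at hcard
        obtain ⟨i0, hi0s, hmin⟩ := Finset.exists_min_image
          (Finset.univ.filter (fun i : Fin m => A.1 i kF ≠ 0))
          (fun i => if A.1 i kF = 0 then 0 else (A.1 i kF).natDegree + 1) hsne
        obtain ⟨i1, hi1s, hi1ne⟩ := Finset.exists_mem_ne hcard i0
        have hb : A.1 i0 kF ≠ 0 := by
          rw [Finset.mem_filter] at hi0s; exact hi0s.2
        have ha : A.1 i1 kF ≠ 0 := by
          rw [Finset.mem_filter] at hi1s; exact hi1s.2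
        have hbm : Monic (A.1 i0 kF * C (A.1 i0 kF).leadingCoeff⁻¹) :=
          monic_mul_leadingCoeff_inv hb
        set c : Polynomial K :=
          C (A.1 i0 kF).leadingCoeff⁻¹ * (A.1 i1 kF /ₘ (A.1 i0 kF * C (A.1 i0 kF).leadingCoeff⁻¹))
          with hcdef
        set rem : Polynomial K := A.1 i1 kF %ₘ (A.1 i0 kF * C (A.1 i0 kF).leadingCoeff⁻¹)
          with hremdef
        have hrem : A.1 i1 kF - c * A.1 i0 kF = rem := by
          rw [hremdef, modByMonic_eq_sub_mul_div _ (A.1 i0 kF * C (A.1 i0 kF).leadingCoeff⁻¹), hcdef]; ring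
        have hlb : (A.1 i0 kF).leadingCoeff⁻¹ ≠ 0 := inv_ne_zero (mt leadingCoeff_eq_zero.1 hb)
        have hdeg : rem.degree < (A.1 i0 kF).degree := by
          have h := degree_modByMonic_lt (A.1 i1 kF) hbm
          rwa [degree_mul, degree_C hlb, add_zero] at h
        apply mem_of_T_mul i1 i0 hi1ne (-c)
        set A' := T i1 i0 hi1ne (-c) * A with hA'def
        have e' : ∀ x y, A'.1 x y = A.1 x y + (if x = i1 then (-c) * A.1 i0 y else 0) :=
          fun x y => T_mul_apply i1 i0 hi1ne (-c) A x y
        have hF' : Fixed k A' := Fixed_T_mul k i1 i0 hi1ne (hge i1 ha) (hge i0 hb) (-c) A hF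
        have hval : A'.1 i1 kF = rem := by
          rw [e', if_pos rfl, ← hrem]; ring
        have hvaleq : ∀ i, i ≠ i1 → A'.1 i kF = A.1 i kF := by
          intro i hi; rw [e', if_neg hi, add_zero]
        have hkey : (if A'.1 i1 kF = 0 then 0 else (A'.1 i1 kF).natDegree + 1) <
            (if A.1 i1 kF = 0 then 0 else (A.1 i1 kF).natDegree + 1) := by
          rw [hval, if_neg ha]
          by_cases hr0 : rem = 0
          · rw [if_pos hr0]; omega
          · rw [if_neg hr0]
            have h1 : rem.natDegree < (A.1 i0 kF).natDegree := natDegree_lt_natDegree hr0 hdeg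
            have h2 := hmin i1 hi1s
            rw [if_neg hb, if_neg ha] at h2
            omega
        refine IHN _ ?_ A' hF' rfl
        rw [← hsum]
        apply Finset.sum_lt_sum
        · intro i _
          by_cases hi : i = i1
          · rw [hi]; exact le_of_lt hkey
          · rw [hvaleq i hi]
        · exact ⟨i1, Finset.mem_univ i1, hkey⟩
    exact colRed _ A hFix rfl

end SLGenAux

/-- For `n ≥ 2` and `p` prime, `SL_{n+1}(F_p[t]) = EL_{n+1}(F_p[t])`:
every `(n+1)×(n+1)` matrix over `F_p[t]` of determinant `1` is a finite product of
elementary matrices `e_{i,j}(r)` (`i ≠ j`, `r ∈ F_p[t]`), i.e. the subgroup of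
`SL_{n+1}(F_p[t])` generated by the elementary matrices is the whole group. -/
theorem specialLinearGroup_eq_closure_transvections (n p : ℕ) (hn : 2 ≤ n) (hp : p.Prime) :
    Subgroup.closure
      { A : Matrix.SpecialLinearGroup (Fin (n + 1)) (Polynomial (ZMod p)) |
        ∃ i j : Fin (n + 1), i ≠ j ∧ ∃ r : Polynomial (ZMod p),
          A.1 = Matrix.transvection i j r } = ⊤ := by
  haveI : Fact p.Prime := ⟨hp⟩
  rw [eq_top_iff]
  intro A _
  exact SLGenAux.main (n + 1) A
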